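/- (Lemma 2) Let n ≥ 1 and let ρ0 ∈ ℝ^n be nondecreasing. If (a_A), indexed by the subsets A of {1,…,n−1}, are nonnegative real numbers with ∑_A a_A = 1 and ∑_A a_A S_A = S_B for some subset B ⊆ {1,…,n−1}, then S_A = S_B for every subset A with a_A > 0. In particular, no S_B can be written as a nontrivial convex combination of points S_A distinct from S_B. -/

import Mathlib

/-- The averaging operator `B_{ij}` : averages the populations at vertices `i` and `j`,
leaving the other components unchanged. -/
noncomputable def avg {n : ℕ} (i j : Fin n) (ρ : Fin n → ℝ) : Fin n → ℝ :=
  fun k => if k = i ∨ k = j then (ρ i + ρ j) / 2 else ρ k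

/-- The attainable set `A(ρ0, E)`: all vectors obtained from `ρ0` by applying a finite
sequence of operators `B_{ij}` with `{i,j} ∈ E` (and `i ≠ j`). -/
def attainable (n : ℕ) (E : Set (Sym2 (Fin n))) (ρ0 : Fin n → ℝ) : Set (Fin n → ℝ) :=
  {ρ | ∃ L : List (Fin n × Fin n),
    (∀ p ∈ L, p.1 ≠ p.2 ∧ s(p.1, p.2) ∈ E) ∧
    ρ = L.foldl (fun σ p => avg p.1 p.2 σ) ρ0}

/-- The edge set of the path graph `P_n` (0-based: edges `{i, i+1}` for `i+1 < n`). -/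
def pathEdges (n : ℕ) : Set (Sym2 (Fin n)) :=
  {e | ∃ i : ℕ, ∃ h : i + 1 < n, e = s(⟨i, Nat.lt_of_succ_lt h⟩, ⟨i + 1, h⟩)}

/-- Start of the block of index `j` determined by `A` (0-based: `i ∈ A` means indices
`i` and `i+1` lie in the same block): the least `a` with `[a, j) ⊆ A`. -/
def blockStart (A : Finset ℕ) (j : ℕ) : ℕ :=
  Nat.findGreatest (fun a => a ≠ 0 ∧ (a - 1) ∉ A) j

/-- End of the block of index `j` determined by `A`: the greatest `b ≤ n - 1`
with `[j, b) ⊆ A`. -/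
def blockEnd (n : ℕ) (A : Finset ℕ) (j : ℕ) : ℕ :=
  Nat.findGreatest (fun b => ∀ m ∈ Finset.Ico j b, m ∈ A) (n - 1)

/-- The point `S_A`: on each block of consecutive indices determined by `A`, its
components all equal the average of the components of `ρ0` over that block. -/
noncomputable def SA {n : ℕ} (ρ0 : Fin n → ℝ) (A : Finset ℕ) : Fin n → ℝ :=
  fun j =>
    (∑ m ∈ Finset.Icc (blockStart A (j : ℕ)) (blockEnd n A (j : ℕ)),
        if h : m < n then ρ0 ⟨m, h⟩ else 0) /
      ((blockEnd n A (j : ℕ) - blockStart A (j : ℕ) + 1 : ℕ) : ℝ)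

/-- Apply the adjacent averaging operator `B_{p,p+1}` (0-based) if it exists. -/
noncomputable def stepAt (n : ℕ) (p : ℕ) (ρ : Fin n → ℝ) : Fin n → ℝ :=
  if h : p + 1 < n then avg ⟨p, Nat.lt_of_succ_lt h⟩ ⟨p + 1, h⟩ ρ else ρ

namespace L2aux

lemma bs_le (A : Finset ℕ) (j : ℕ) : blockStart A j ≤ j := Nat.findGreatest_le _

lemma le_be (n : ℕ) (A : Finset ℕ) (j : ℕ) (h : j ≤ n - 1) : j ≤ blockEnd n A j :=
  Nat.le_findGreatest h (by simp)

lemma be_le (n : ℕ) (A : Finset ℕ) (j : ℕ) : blockEnd n A j ≤ n - 1 := Nat.findGreatest_le _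

lemma bs_mem (A : Finset ℕ) (j m : ℕ) (h1 : blockStart A j ≤ m) (h2 : m < j) : m ∈ A := by
  by_contra hm
  have : m + 1 ≤ blockStart A j :=
    Nat.le_findGreatest h2 ⟨Nat.succ_ne_zero m, by simpa using hm⟩
  omega

lemma be_mem (n : ℕ) (A : Finset ℕ) (j m : ℕ) (h1 : j ≤ m) (h2 : m < blockEnd n A j) : m ∈ A := by
  have hne : blockEnd n A j ≠ 0 := by omega
  have hspec := (Nat.findGreatest_eq_iff.mp (rfl :
    Nat.findGreatest (fun b => ∀ m ∈ Finset.Ico j b, m ∈ A) (n-1) = blockEnd n A j)).2.1 hne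
  exact hspec m (Finset.mem_Ico.mpr ⟨h1, h2⟩)

lemma bs_spec (A : Finset ℕ) (j : ℕ) :
    blockStart A j = 0 ∨ (blockStart A j ≠ 0 ∧ blockStart A j - 1 ∉ A) := by
  rcases Nat.eq_zero_or_pos (blockStart A j) with h | h
  · exact Or.inl h
  · have hne : blockStart A j ≠ 0 := by omega
    exact Or.inr ((Nat.findGreatest_eq_iff.mp (rfl :
      Nat.findGreatest (fun a => a ≠ 0 ∧ (a - 1) ∉ A) j = blockStart A j)).2.1 hne)

lemma be_spec (n : ℕ) (A : Finset ℕ) (j : ℕ) (hj : j ≤ n - 1) :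
    blockEnd n A j = n - 1 ∨ blockEnd n A j ∉ A := by
  by_contra h
  push_neg at h
  obtain ⟨h1, h2⟩ := h
  have hle : blockEnd n A j + 1 ≤ n - 1 := by have := be_le n A j; omega
  have : blockEnd n A j + 1 ≤ blockEnd n A j := by
    refine Nat.le_findGreatest hle ?_
    intro m hm
    rw [Finset.mem_Ico] at hm
    rcases Nat.lt_or_ge m (blockEnd n A j) with h | h
    · exact be_mem n A j m hm.1 h
    · have : m = blockEnd n A j := by omega
      rwa [this]
  omega

lemma bs_eq (A : Finset ℕ) (i s : ℕ) (h1 : s ≤ i)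
    (h2 : ∀ m, s ≤ m → m < i → m ∈ A)
    (h3 : s = 0 ∨ (s ≠ 0 ∧ s - 1 ∉ A)) : blockStart A i = s := by
  have hge : s ≤ blockStart A i := by
    rcases h3 with h | h
    · omega
    · exact Nat.le_findGreatest h1 h
  rcases Nat.lt_or_ge s (blockStart A i) with h | h
  · rcases bs_spec A i with h' | h'
    · omega
    · exact absurd (h2 (blockStart A i - 1) (by omega) (by have := bs_le A i; omega)) h'.2
  · omega

lemma be_eq (n : ℕ) (A : Finset ℕ) (i e : ℕ) (h0 : i ≤ e) (h1 : e ≤ n - 1)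
    (h2 : ∀ m, i ≤ m → m < e → m ∈ A)
    (h3 : e = n - 1 ∨ e ∉ A) : blockEnd n A i = e := by
  have hge : e ≤ blockEnd n A i := by
    refine Nat.le_findGreatest h1 ?_
    intro m hm; rw [Finset.mem_Ico] at hm; exact h2 m hm.1 hm.2
  rcases Nat.lt_or_ge e (blockEnd n A i) with h | h
  · have heA : e ∈ A := be_mem n A i e h0 h
    have : e ≠ n - 1 := by have := be_le n A i; omega
    rcases h3 with h' | h' <;> [omega; exact absurd heA h']
  · omega

lemma block_mem (n : ℕ) (A : Finset ℕ) (j i : ℕ) (hj : j ≤ n - 1)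
    (h1 : blockStart A j ≤ i) (h2 : i ≤ blockEnd n A j) :
    blockStart A i = blockStart A j ∧ blockEnd n A i = blockEnd n A j := by
  have hsj := bs_le A j
  have hje := le_be n A j hj
  constructor
  · refine bs_eq A i (blockStart A j) h1 ?_ (bs_spec A j)
    intro m hm1 hm2
    rcases Nat.lt_or_ge m j with h | h
    · exact bs_mem A j m hm1 h
    · exact be_mem n A j m h (by omega)
  · refine be_eq n A i (blockEnd n A j) h2 (be_le n A j) ?_ (be_spec n A j hj)
    intro m hm1 hm2
    rcases Nat.lt_or_ge m j with h | h
    · exact bs_mem A j m (by omega) h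
    · exact be_mem n A j m h hm2
end L2aux

namespace L2aux2

lemma icc_split (ρ1 : ℕ → ℝ) (s b e : ℕ) (h1 : s ≤ b) (h2 : b ≤ e) :
    ∑ m ∈ Finset.Icc s e, ρ1 m = (∑ m ∈ Finset.Icc s b, ρ1 m) + ∑ m ∈ Finset.Icc (b+1) e, ρ1 m := by
  rw [← Finset.Ico_add_one_right_eq_Icc, ← Finset.Ico_add_one_right_eq_Icc, ← Finset.Ico_add_one_right_eq_Icc,
    Finset.sum_Ico_consecutive ρ1 (show s ≤ b + 1 by omega) (show b + 1 ≤ e + 1 by omega)]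

lemma sum_le_max (ρ1 : ℕ → ℝ) (a b : ℕ) (hab : a ≤ b) (hm : ∀ x, a ≤ x → x ≤ b → ρ1 x ≤ ρ1 b) :
    ∑ m ∈ Finset.Icc a b, ρ1 m ≤ ((b - a + 1 : ℕ) : ℝ) * ρ1 b := by
  have h := Finset.sum_le_card_nsmul (Finset.Icc a b) ρ1 (ρ1 b)
    (fun x hx => by rw [Finset.mem_Icc] at hx; exact hm x hx.1 hx.2)
  rw [Nat.card_Icc, show b + 1 - a = b - a + 1 by omega, nsmul_eq_mul] at h
  exact h

lemma min_le_sum (ρ1 : ℕ → ℝ) (a b : ℕ) (hab : a ≤ b) (hm : ∀ x, a ≤ x → x ≤ b → ρ1 a ≤ ρ1 x) :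
    ((b - a + 1 : ℕ) : ℝ) * ρ1 a ≤ ∑ m ∈ Finset.Icc a b, ρ1 m := by
  have h := Finset.card_nsmul_le_sum (Finset.Icc a b) ρ1 (ρ1 a)
    (fun x hx => by rw [Finset.mem_Icc] at hx; exact hm x hx.1 hx.2)
  rw [Nat.card_Icc, show b + 1 - a = b - a + 1 by omega, nsmul_eq_mul] at h
  exact h

/-- prefix average ≤ total average (cross-multiplied form) -/
lemma PL (ρ1 : ℕ → ℝ) (s b e : ℕ) (hsb : s ≤ b) (hbe : b ≤ e)
    (hm : ∀ x y, x ≤ y → y ≤ e → ρ1 x ≤ ρ1 y) :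
    ((e - s + 1 : ℕ) : ℝ) * ∑ m ∈ Finset.Icc s b, ρ1 m ≤
      ((b - s + 1 : ℕ) : ℝ) * ∑ m ∈ Finset.Icc s e, ρ1 m := by
  rcases Nat.eq_or_lt_of_le hbe with rfl | hlt
  · exact le_rfl
  · set P := ∑ m ∈ Finset.Icc s b, ρ1 m with hP
    set Q := ∑ m ∈ Finset.Icc (b+1) e, ρ1 m with hQ
    have hsplit := icc_split ρ1 s b e hsb hbe
    have hPle : P ≤ ((b - s + 1 : ℕ) : ℝ) * ρ1 b :=
      sum_le_max ρ1 s b hsb (fun x hx1 hx2 => hm x b hx2 hbe)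
    have hQge : ((e - (b+1) + 1 : ℕ) : ℝ) * ρ1 (b+1) ≤ Q :=
      min_le_sum ρ1 (b+1) e hlt (fun x hx1 hx2 => hm (b+1) x hx1 hx2)
    have hbb : ρ1 b ≤ ρ1 (b+1) := hm b (b+1) (by omega) hlt
    have hq : (e - (b+1) + 1) = e - b := by omega
    rw [hq] at hQge
    have hcast : ((e - s + 1 : ℕ) : ℝ) = ((b - s + 1 : ℕ) : ℝ) + ((e - b : ℕ) : ℝ) := by
      push_cast [Nat.cast_sub (by omega : s ≤ e)]
      push_cast [Nat.cast_sub (by omega : s ≤ b), Nat.cast_sub (by omega : b ≤ e)]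
      ring
    have hp0 : (0:ℝ) ≤ ((b - s + 1 : ℕ) : ℝ) := by positivity
    have hq0 : (0:ℝ) ≤ ((e - b : ℕ) : ℝ) := by positivity
    rw [hsplit, hcast]
    have h1 : ((e - b : ℕ) : ℝ) * P ≤ ((e - b : ℕ) : ℝ) * (((b - s + 1 : ℕ) : ℝ) * ρ1 b) :=
      mul_le_mul_of_nonneg_left hPle hq0
    have h2 : ((b - s + 1 : ℕ) : ℝ) * (((e - b : ℕ) : ℝ) * ρ1 b) ≤
        ((b - s + 1 : ℕ) : ℝ) * (((e - b : ℕ) : ℝ) * ρ1 (b+1)) :=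
      mul_le_mul_of_nonneg_left (mul_le_mul_of_nonneg_left hbb hq0) hp0
    have h3 : ((b - s + 1 : ℕ) : ℝ) * (((e - b : ℕ) : ℝ) * ρ1 (b+1)) ≤
        ((b - s + 1 : ℕ) : ℝ) * Q := mul_le_mul_of_nonneg_left hQge hp0
    nlinarith [h1, h2, h3]

/-- equality of prefix and total average forces constancy -/
lemma Mconst (ρ1 : ℕ → ℝ) (s b e : ℕ) (hsb : s ≤ b) (hbe : b < e)
    (hm : ∀ x y, x ≤ y → y ≤ e → ρ1 x ≤ ρ1 y)
    (heq : ((e - s + 1 : ℕ) : ℝ) * ∑ m ∈ Finset.Icc s b, ρ1 m =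
      ((b - s + 1 : ℕ) : ℝ) * ∑ m ∈ Finset.Icc s e, ρ1 m) :
    ∀ m, s ≤ m → m ≤ e → ρ1 m = ρ1 s := by
  set P := ∑ m ∈ Finset.Icc s b, ρ1 m with hP
  set Q := ∑ m ∈ Finset.Icc (b+1) e, ρ1 m with hQ
  have hsplit := icc_split ρ1 s b e hsb (le_of_lt hbe)
  have hPle : P ≤ ((b - s + 1 : ℕ) : ℝ) * ρ1 b :=
    sum_le_max ρ1 s b hsb (fun x hx1 hx2 => hm x b hx2 (le_of_lt hbe))
  have hQge : ((e - (b+1) + 1 : ℕ) : ℝ) * ρ1 (b+1) ≤ Q :=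
    min_le_sum ρ1 (b+1) e hbe (fun x hx1 hx2 => hm (b+1) x hx1 hx2)
  have hbb : ρ1 b ≤ ρ1 (b+1) := hm b (b+1) (by omega) hbe
  have hq : (e - (b+1) + 1) = e - b := by omega
  rw [hq] at hQge
  have hcast : ((e - s + 1 : ℕ) : ℝ) = ((b - s + 1 : ℕ) : ℝ) + ((e - b : ℕ) : ℝ) := by
    push_cast [Nat.cast_sub (by omega : s ≤ e), Nat.cast_sub (by omega : s ≤ b),
      Nat.cast_sub (by omega : b ≤ e)]
    ring
  have hp0 : (0:ℝ) < ((b - s + 1 : ℕ) : ℝ) := by positivity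
  have hq0 : (0:ℝ) < ((e - b : ℕ) : ℝ) := by
    have : 0 < e - b := by omega
    exact_mod_cast Nat.cast_pos.mpr this
  -- from heq : (p+q) P = p (P+Q) hence q P = p Q
  have hqPpQ : ((e - b : ℕ) : ℝ) * P = ((b - s + 1 : ℕ) : ℝ) * Q := by
    rw [hsplit, hcast] at heq; linear_combination heq
  -- force equalities
  have h1 : ((e - b : ℕ) : ℝ) * P ≤ ((e - b : ℕ) : ℝ) * (((b - s + 1 : ℕ) : ℝ) * ρ1 b) :=
    mul_le_mul_of_nonneg_left hPle (le_of_lt hq0)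
  have h2 : ((e - b : ℕ) : ℝ) * (((b - s + 1 : ℕ) : ℝ) * ρ1 b) ≤
      ((e - b : ℕ) : ℝ) * (((b - s + 1 : ℕ) : ℝ) * ρ1 (b+1)) :=
    mul_le_mul_of_nonneg_left (mul_le_mul_of_nonneg_left hbb (le_of_lt hp0)) (le_of_lt hq0)
  have h2' : ((e - b : ℕ) : ℝ) * (((b - s + 1 : ℕ) : ℝ) * ρ1 (b+1)) =
      ((b - s + 1 : ℕ) : ℝ) * (((e - b : ℕ) : ℝ) * ρ1 (b+1)) := by ring
  have h3 : ((b - s + 1 : ℕ) : ℝ) * (((e - b : ℕ) : ℝ) * ρ1 (b+1)) ≤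
      ((b - s + 1 : ℕ) : ℝ) * Q := mul_le_mul_of_nonneg_left hQge (le_of_lt hp0)
  have e1 : ((e - b : ℕ) : ℝ) * P = ((e - b : ℕ) : ℝ) * (((b - s + 1 : ℕ) : ℝ) * ρ1 b) :=
    le_antisymm h1 (by linarith)
  have hPeq : P = ((b - s + 1 : ℕ) : ℝ) * ρ1 b := mul_left_cancel₀ (ne_of_gt hq0) e1
  have e2 : ((b - s + 1 : ℕ) : ℝ) * (((e - b : ℕ) : ℝ) * ρ1 (b+1)) =
      ((b - s + 1 : ℕ) : ℝ) * Q := le_antisymm h3 (by linarith)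
  have hQeq : Q = ((e - b : ℕ) : ℝ) * ρ1 (b+1) :=
    (mul_left_cancel₀ (ne_of_gt hp0) e2).symm
  have e3 : ((e - b : ℕ) : ℝ) * (((b - s + 1 : ℕ) : ℝ) * ρ1 b) =
      ((e - b : ℕ) : ℝ) * (((b - s + 1 : ℕ) : ℝ) * ρ1 (b+1)) := le_antisymm h2 (by linarith)
  have hbeq : ρ1 b = ρ1 (b+1) :=
    mul_left_cancel₀ (ne_of_gt hp0) (mul_left_cancel₀ (ne_of_gt hq0) e3)
  -- constancy on [s,b]
  have hc1 : ∀ m ∈ Finset.Icc s b, ρ1 m = ρ1 b := by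
    have hz : ∑ m ∈ Finset.Icc s b, (ρ1 b - ρ1 m) = 0 := by
      rw [Finset.sum_sub_distrib, Finset.sum_const, Nat.card_Icc,
        show b + 1 - s = b - s + 1 by omega, nsmul_eq_mul]
      linarith
    intro m hmm
    have := (Finset.sum_eq_zero_iff_of_nonneg (fun x hx => by
      rw [Finset.mem_Icc] at hx
      have := hm x b hx.2 (le_of_lt hbe); linarith)).mp hz m hmm
    linarith
  have hc2 : ∀ m ∈ Finset.Icc (b+1) e, ρ1 m = ρ1 (b+1) := by
    have hz : ∑ m ∈ Finset.Icc (b+1) e, (ρ1 m - ρ1 (b+1)) = 0 := by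
      rw [Finset.sum_sub_distrib, Finset.sum_const, Nat.card_Icc,
        show e + 1 - (b+1) = e - b by omega, nsmul_eq_mul]
      linarith
    intro m hmm
    have := (Finset.sum_eq_zero_iff_of_nonneg (fun x hx => by
      rw [Finset.mem_Icc] at hx
      have := hm (b+1) x hx.1 hx.2; linarith)).mp hz m hmm
    linarith
  have hsb' : ρ1 s = ρ1 b := hc1 s (Finset.mem_Icc.mpr ⟨le_rfl, hsb⟩)
  intro m hm1 hm2
  rcases le_or_gt m b with h | h
  · rw [hc1 m (Finset.mem_Icc.mpr ⟨hm1, h⟩), hsb']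
  · rw [hc2 m (Finset.mem_Icc.mpr ⟨h, hm2⟩), ← hbeq, hsb']

end L2aux2



namespace L2main
open L2aux L2aux2

noncomputable def rr (n : ℕ) (ρ0 : Fin n → ℝ) (m : ℕ) : ℝ := if h : m < n then ρ0 ⟨m, h⟩ else 0

noncomputable def SAn (n : ℕ) (ρ0 : Fin n → ℝ) (A : Finset ℕ) (m : ℕ) : ℝ :=
  (∑ i ∈ Finset.Icc (blockStart A m) (blockEnd n A m), rr n ρ0 i) /
    ((blockEnd n A m - blockStart A m + 1 : ℕ) : ℝ)

lemma SA_apply {n : ℕ} (ρ0 : Fin n → ℝ) (A : Finset ℕ) (j : Fin n) :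
    SA ρ0 A j = SAn n ρ0 A j.val := rfl

noncomputable def Gg (n : ℕ) (ρ0 : Fin n → ℝ) (A : Finset ℕ) (k : ℕ) : ℝ :=
  ∑ m ∈ Finset.range k, SAn n ρ0 A m

noncomputable def Tt (n : ℕ) (ρ0 : Fin n → ℝ) (k : ℕ) : ℝ :=
  ∑ m ∈ Finset.range k, rr n ρ0 m

variable {n : ℕ} (ρ0 : Fin n → ℝ)

lemma SAn_const (A : Finset ℕ) (j i : ℕ) (hj : j ≤ n - 1)
    (h1 : blockStart A j ≤ i) (h2 : i ≤ blockEnd n A j) :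
    SAn n ρ0 A i = SAn n ρ0 A j := by
  unfold SAn
  rw [(block_mem n A j i hj h1 h2).1, (block_mem n A j i hj h1 h2).2]

lemma Tt_split (k1 k2 : ℕ) (h : k1 ≤ k2) :
    Tt n ρ0 k2 = Tt n ρ0 k1 + ∑ m ∈ Finset.Ico k1 k2, rr n ρ0 m := by
  unfold Tt
  rw [Finset.range_eq_Ico, Finset.range_eq_Ico, ← Finset.sum_Ico_consecutive _ (Nat.zero_le k1) h]

lemma G_formula (A : Finset ℕ) (j k : ℕ) (hj : j ≤ n - 1)
    (hk1 : blockStart A j ≤ k) (hk2 : k ≤ blockEnd n A j + 1) :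
    Gg n ρ0 A k = Gg n ρ0 A (blockStart A j) +
      ((k - blockStart A j : ℕ) : ℝ) * SAn n ρ0 A j := by
  unfold Gg
  rw [Finset.range_eq_Ico, Finset.range_eq_Ico, ← Finset.sum_Ico_consecutive _ (Nat.zero_le (blockStart A j)) hk1]
  congr 1
  have hconst : ∀ m ∈ Finset.Ico (blockStart A j) k, SAn n ρ0 A m = SAn n ρ0 A j := by
    intro m hm
    rw [Finset.mem_Ico] at hm
    exact SAn_const ρ0 A j m hj hm.1 (by omega)
  rw [Finset.sum_congr rfl hconst, Finset.sum_const, Nat.card_Ico, nsmul_eq_mul]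

lemma G_boundary (hn : 1 ≤ n) (A : Finset ℕ) (hA : A ⊆ Finset.range (n - 1)) :
    ∀ k, k ≤ n → (k = 0 ∨ (k - 1) ∉ A) → Gg n ρ0 A k = Tt n ρ0 k := by
  intro k
  induction k using Nat.strong_induction_on with
  | _ k IH =>
    intro hkn hbd
    rcases Nat.eq_zero_or_pos k with rfl | hk
    · simp [Gg, Tt]
    · have hj : k - 1 ≤ n - 1 := by omega
      have hbd' : k - 1 ∉ A := by rcases hbd with h | h; omega; exact h
      have hbe : blockEnd n A (k - 1) = k - 1 := by
        have h1 := le_be n A (k - 1) hj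
        have h2 : ¬ k - 1 < blockEnd n A (k - 1) :=
          fun h => hbd' (be_mem n A (k - 1) (k - 1) le_rfl h)
        omega
      have hs_le : blockStart A (k - 1) ≤ k - 1 := bs_le A (k - 1)
      have hG := G_formula ρ0 A (k - 1) k hj (by omega) (by omega)
      have hGs : Gg n ρ0 A (blockStart A (k - 1)) = Tt n ρ0 (blockStart A (k - 1)) := by
        refine IH _ (by omega) (by omega) ?_
        rcases bs_spec A (k - 1) with h | h
        · exact Or.inl h
        · exact Or.inr h.2
      have hsum : ((k - blockStart A (k - 1) : ℕ) : ℝ) * SAn n ρ0 A (k - 1) =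
          ∑ m ∈ Finset.Icc (blockStart A (k - 1)) (k - 1), rr n ρ0 m := by
        have hne : ((k - 1 - blockStart A (k - 1) + 1 : ℕ) : ℝ) ≠ 0 :=
          Nat.cast_ne_zero.mpr (by omega)
        unfold SAn
        rw [hbe, show k - blockStart A (k - 1) = k - 1 - blockStart A (k - 1) + 1 by omega,
          mul_comm, div_mul_cancel₀ _ hne]
      rw [hG, hGs, hsum, Tt_split ρ0 (blockStart A (k - 1)) k (by omega),
        show Finset.Ico (blockStart A (k - 1)) k = Finset.Icc (blockStart A (k - 1)) (k - 1) by
          rw [← Finset.Ico_add_one_right_eq_Icc]; congr 1; omega]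

lemma G_ge (hn : 1 ≤ n) (A : Finset ℕ) (hA : A ⊆ Finset.range (n - 1))
    (hr : ∀ x y, x ≤ y → y < n → rr n ρ0 x ≤ rr n ρ0 y) :
    ∀ k, k ≤ n → Tt n ρ0 k ≤ Gg n ρ0 A k := by
  intro k hkn
  rcases Nat.eq_zero_or_pos k with rfl | hk
  · simp [Gg, Tt]
  · set j := k - 1 with hjdef
    have hj : j ≤ n - 1 := by omega
    set s := blockStart A j with hsdef
    set e := blockEnd n A j with hedef
    have hs_le : s ≤ j := bs_le A j
    have hje : j ≤ e := le_be n A j hj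
    have hen : e ≤ n - 1 := be_le n A j
    have hG := G_formula ρ0 A j k hj (by omega) (by omega)
    have hGs : Gg n ρ0 A s = Tt n ρ0 s := by
      refine G_boundary ρ0 hn A hA s (by omega) ?_
      rcases bs_spec A j with h | h
      · exact Or.inl h
      · exact Or.inr h.2
    have hTk : Tt n ρ0 k = Tt n ρ0 s + ∑ m ∈ Finset.Icc s j, rr n ρ0 m := by
      have hik : Finset.Ico s k = Finset.Icc s j := by
        rw [← Finset.Ico_add_one_right_eq_Icc, show j + 1 = k by omega]
      rw [Tt_split ρ0 s k (by omega), hik]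
    have hPL := PL (rr n ρ0) s j e hs_le hje
      (fun x y hxy hye => hr x y hxy (by omega))
    have hpos : (0:ℝ) < ((e - s + 1 : ℕ) : ℝ) := by positivity
    have hk_s : ((k - s : ℕ) : ℝ) = ((j - s + 1 : ℕ) : ℝ) := by
      congr 1; omega
    have hineq : ∑ m ∈ Finset.Icc s j, rr n ρ0 m ≤ ((k - s : ℕ) : ℝ) * SAn n ρ0 A j := by
      rw [hk_s]
      unfold SAn
      rw [← hsdef, ← hedef, ← mul_div_assoc, le_div_iff₀ hpos]
      linarith [hPL]
    rw [hG, hGs, hTk]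
    linarith

lemma SAn_mul (A : Finset ℕ) (j : ℕ) (hj : j ≤ n - 1) :
    SAn n ρ0 A j * ((blockEnd n A j - blockStart A j + 1 : ℕ) : ℝ) =
      ∑ i ∈ Finset.Icc (blockStart A j) (blockEnd n A j), rr n ρ0 i := by
  unfold SAn
  rw [div_mul_cancel₀]
  have := bs_le A j
  have := le_be n A j hj
  exact Nat.cast_ne_zero.mpr (by omega)

end L2main

open L2aux L2aux2 L2main

/-- Lemma 2: no point `S_B` can be written as a nontrivial convex combination of the
points `S_A`: if a convex combination of the `S_A` equals `S_B`, then every `S_A`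
appearing with positive weight equals `S_B`. -/
theorem SA_extreme_among_SA (n : ℕ) (hn : 1 ≤ n)
    (ρ0 : Fin n → ℝ) (hρ0 : Monotone ρ0)
    (a : Finset ℕ → ℝ)
    (ha : ∀ A ∈ (Finset.range (n - 1)).powerset, 0 ≤ a A)
    (hsum : ∑ A ∈ (Finset.range (n - 1)).powerset, a A = 1)
    (B : Finset ℕ) (hB : B ⊆ Finset.range (n - 1))
    (hcomb : ∑ A ∈ (Finset.range (n - 1)).powerset, a A • SA ρ0 A = SA ρ0 B) :
    ∀ A ∈ (Finset.range (n - 1)).powerset, 0 < a A → SA ρ0 A = SA ρ0 B := by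
  classical
  intro A hAmem hApos
  have hA : A ⊆ Finset.range (n - 1) := Finset.mem_powerset.mp hAmem
  have hr : ∀ x y, x ≤ y → y < n → rr n ρ0 x ≤ rr n ρ0 y := by
    intro x y hxy hy
    unfold rr
    rw [dif_pos (lt_of_le_of_lt hxy hy), dif_pos hy]
    exact hρ0 (Fin.mk_le_mk.mpr hxy)
  have hpt : ∀ m, m < n →
      ∑ A' ∈ (Finset.range (n - 1)).powerset, a A' * SAn n ρ0 A' m = SAn n ρ0 B m := by
    intro m hm
    have h := congrFun hcomb ⟨m, hm⟩
    rw [Finset.sum_apply] at h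
    simpa [SA_apply, Pi.smul_apply, smul_eq_mul] using h
  have hGcomb : ∀ k, k ≤ n →
      ∑ A' ∈ (Finset.range (n - 1)).powerset, a A' * Gg n ρ0 A' k = Gg n ρ0 B k := by
    intro k hk
    unfold Gg
    simp_rw [Finset.mul_sum]
    rw [Finset.sum_comm]
    exact Finset.sum_congr rfl fun m hm =>
      hpt m (lt_of_lt_of_le (Finset.mem_range.mp hm) hk)
  have step1 : ∀ A' ∈ (Finset.range (n - 1)).powerset, 0 < a A' →
      ∀ k, k ≤ n → (k = 0 ∨ (k - 1) ∉ B) → Gg n ρ0 A' k = Tt n ρ0 k := by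
    intro A' hA'mem hpos' k hk hbd
    have hGB : Gg n ρ0 B k = Tt n ρ0 k := G_boundary ρ0 hn B hB k hk hbd
    have hzero : ∑ A'' ∈ (Finset.range (n - 1)).powerset,
        a A'' * (Gg n ρ0 A'' k - Tt n ρ0 k) = 0 := by
      simp_rw [mul_sub]
      rw [Finset.sum_sub_distrib, hGcomb k hk, ← Finset.sum_mul, hsum, one_mul, hGB, sub_self]
    have hnn : ∀ A'' ∈ (Finset.range (n - 1)).powerset,
        0 ≤ a A'' * (Gg n ρ0 A'' k - Tt n ρ0 k) := by
      intro A'' hmem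
      exact mul_nonneg (ha A'' hmem) (sub_nonneg.mpr
        (G_ge ρ0 hn A'' (Finset.mem_powerset.mp hmem) hr k hk))
    have h0 := (Finset.sum_eq_zero_iff_of_nonneg hnn).mp hzero A' hA'mem
    rcases mul_eq_zero.mp h0 with h | h
    · exact absurd h (ne_of_gt hpos')
    · linarith
  funext j
  rw [SA_apply, SA_apply]
  have hjn : (j : ℕ) ≤ n - 1 := by have := j.isLt; omega
  set s := blockStart B (j : ℕ) with hsdef
  set e := blockEnd n B (j : ℕ) with hedef
  have hs_le : s ≤ (j : ℕ) := bs_le B (j : ℕ)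
  have hje : (j : ℕ) ≤ e := le_be n B (j : ℕ) hjn
  have hen : e ≤ n - 1 := be_le n B (j : ℕ)
  have hsn : s ≤ n - 1 := by omega
  have hbd_s : s = 0 ∨ (s - 1) ∉ B := by
    rcases bs_spec B (j : ℕ) with h | h
    · exact Or.inl h
    · exact Or.inr h.2
  have heB : e ∉ B := by
    rcases be_spec n B (j : ℕ) hjn with h | h
    · intro hmem; have h2 := hB hmem; rw [Finset.mem_range] at h2; omega
    · exact h
  have hbd_e1 : e + 1 = 0 ∨ (e + 1 - 1) ∉ B := by
    right; simpa using heB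
  -- key relation (⋆)
  have hstar : ∀ A' ∈ (Finset.range (n - 1)).powerset, 0 < a A' →
      ((min (blockEnd n A' s) e + 1 - s : ℕ) : ℝ) * SAn n ρ0 A' s =
        ∑ m ∈ Finset.Icc s (min (blockEnd n A' s) e), rr n ρ0 m := by
    intro A' hA'mem hpos'
    have hA'sub : A' ⊆ Finset.range (n - 1) := Finset.mem_powerset.mp hA'mem
    set s' := blockStart A' s with hs'def
    set e' := blockEnd n A' s with he'def
    set e'' := min e' e with he''def
    have hs's : s' ≤ s := bs_le A' s
    have hse' : s ≤ e' := le_be n A' s hsn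
    have he'n : e' ≤ n - 1 := be_le n A' s
    have hse'' : s ≤ e'' := le_min hse' (by omega)
    have h1 : Gg n ρ0 A' s = Tt n ρ0 s := step1 A' hA'mem hpos' s (by omega) hbd_s
    have h2 : Gg n ρ0 A' s = Gg n ρ0 A' s' + ((s - s' : ℕ) : ℝ) * SAn n ρ0 A' s :=
      G_formula ρ0 A' s s hsn (by omega) (by omega)
    have h3 : Gg n ρ0 A' s' = Tt n ρ0 s' := by
      refine G_boundary ρ0 hn A' hA'sub s' (by omega) ?_
      rcases bs_spec A' s with h | h
      · exact Or.inl h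
      · exact Or.inr h.2
    have h4 : Gg n ρ0 A' (e'' + 1) = Tt n ρ0 (e'' + 1) := by
      rcases le_or_gt e' e with hle | hlt
      · rw [show e'' = e' from min_eq_left hle]
        refine G_boundary ρ0 hn A' hA'sub (e' + 1) (by omega) (Or.inr ?_)
        simp only [Nat.add_sub_cancel]
        rcases be_spec n A' s hsn with h | h
        · intro hmem; have h2 := hA'sub hmem; rw [Finset.mem_range] at h2; omega
        · exact h
      · rw [show e'' = e from min_eq_right (le_of_lt hlt)]
        exact step1 A' hA'mem hpos' (e + 1) (by omega) hbd_e1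
    have h5 : Gg n ρ0 A' (e'' + 1) =
        Gg n ρ0 A' s' + ((e'' + 1 - s' : ℕ) : ℝ) * SAn n ρ0 A' s :=
      G_formula ρ0 A' s (e'' + 1) hsn (by omega) (by omega)
    have hTdiff : Tt n ρ0 (e'' + 1) = Tt n ρ0 s + ∑ m ∈ Finset.Icc s e'', rr n ρ0 m := by
      rw [Tt_split ρ0 s (e'' + 1) (by omega), Finset.Ico_add_one_right_eq_Icc]
    have hmul : ((e'' + 1 - s : ℕ) : ℝ) * SAn n ρ0 A' s =
        ((e'' + 1 - s' : ℕ) : ℝ) * SAn n ρ0 A' s - ((s - s' : ℕ) : ℝ) * SAn n ρ0 A' s := by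
      rw [show ((e'' + 1 - s' : ℕ) : ℝ) = ((e'' + 1 - s : ℕ) : ℝ) + ((s - s' : ℕ) : ℝ) by
        rw [show e'' + 1 - s' = (e'' + 1 - s) + (s - s') by omega]; push_cast; ring]
      ring
    linarith [h1, h2, h3, h4, h5, hTdiff, hmul]
  -- value of S_B on the block
  set v := SAn n ρ0 B (j : ℕ) with hvdef
  have hvs : SAn n ρ0 B s = v := SAn_const ρ0 B (j : ℕ) s hjn le_rfl (le_trans hs_le hje)
  have hpose : (0:ℝ) < ((e - s + 1 : ℕ) : ℝ) := by
    have h : 0 < e - s + 1 := by omega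
    exact_mod_cast h
  have hv2 : v * ((e - s + 1 : ℕ) : ℝ) = ∑ m ∈ Finset.Icc s e, rr n ρ0 m :=
    SAn_mul ρ0 B (j : ℕ) hjn
  -- Jensen at coordinate s
  have hle : ∀ A' ∈ (Finset.range (n - 1)).powerset, 0 < a A' → SAn n ρ0 A' s ≤ v := by
    intro A' hA'mem hpos'
    have hst := hstar A' hA'mem hpos'
    set e' := blockEnd n A' s with he'def
    set e'' := min e' e with he''def
    have hse' : s ≤ e' := le_be n A' s hsn
    have hse'' : s ≤ e'' := le_min hse' (le_trans hs_le hje)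
    have he''e : e'' ≤ e := min_le_right _ _
    have hPL := PL (rr n ρ0) s e'' e hse'' he''e (fun x y hxy hye => hr x y hxy (by omega))
    have hpos1 : (0:ℝ) < ((e'' + 1 - s : ℕ) : ℝ) := by
      have h : 0 < e'' + 1 - s := by omega
      exact_mod_cast h
    have hσ : SAn n ρ0 A' s = (∑ m ∈ Finset.Icc s e'', rr n ρ0 m) / ((e'' + 1 - s : ℕ) : ℝ) := by
      rw [eq_div_iff (ne_of_gt hpos1), mul_comm]
      exact hst
    have hvv : v = (∑ m ∈ Finset.Icc s e, rr n ρ0 m) / ((e - s + 1 : ℕ) : ℝ) := by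
      rw [eq_div_iff (ne_of_gt hpose)]
      exact hv2
    rw [hσ, hvv, div_le_div_iff₀ hpos1 hpose,
      show ((e'' + 1 - s : ℕ) : ℝ) = ((e'' - s + 1 : ℕ) : ℝ) by congr 1; omega]
    linarith [hPL]
  have hzero : ∑ A' ∈ (Finset.range (n - 1)).powerset, a A' * (v - SAn n ρ0 A' s) = 0 := by
    simp_rw [mul_sub]
    rw [Finset.sum_sub_distrib, ← Finset.sum_mul, hsum, one_mul, hpt s (by omega), hvs, sub_self]
  have hnn : ∀ A' ∈ (Finset.range (n - 1)).powerset, 0 ≤ a A' * (v - SAn n ρ0 A' s) := by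
    intro A' hmem
    rcases eq_or_lt_of_le (ha A' hmem) with h | h
    · rw [← h, zero_mul]
    · exact mul_nonneg (le_of_lt h) (sub_nonneg.mpr (hle A' hmem h))
  have hAs : SAn n ρ0 A s = v := by
    have h0 := (Finset.sum_eq_zero_iff_of_nonneg hnn).mp hzero A hAmem
    rcases mul_eq_zero.mp h0 with h | h
    · exact absurd h (ne_of_gt hApos)
    · linarith
  -- final case analysis
  rcases le_or_gt e (blockEnd n A s) with hcase | hcase
  · -- A-block of s covers the whole B-block; j lies in it
    have h := SAn_const ρ0 A s (j : ℕ) hsn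
      (le_trans (bs_le A s) (by omega)) (by omega)
    rw [h]
    exact hAs
  · -- e' < e : ρ0 is constant on the block
    set eA := blockEnd n A s with heAdef
    have hseA : s ≤ eA := le_be n A s hsn
    have hstA := hstar A hAmem hApos
    rw [min_eq_left (le_of_lt hcase)] at hstA
    have heq : ((e - s + 1 : ℕ) : ℝ) * ∑ m ∈ Finset.Icc s eA, rr n ρ0 m =
        ((eA - s + 1 : ℕ) : ℝ) * ∑ m ∈ Finset.Icc s e, rr n ρ0 m := by
      rw [← hstA, hAs, ← hv2,
        show ((eA + 1 - s : ℕ) : ℝ) = ((eA - s + 1 : ℕ) : ℝ) by congr 1; omega]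
      ring
    have hconst := Mconst (rr n ρ0) s eA e hseA hcase
      (fun x y hxy hye => hr x y hxy (by omega)) heq
    have hvrr : v = rr n ρ0 s := by
      have hsc : ∑ m ∈ Finset.Icc s e, rr n ρ0 m = ((e - s + 1 : ℕ) : ℝ) * rr n ρ0 s := by
        have hcc : ∀ m ∈ Finset.Icc s e, rr n ρ0 m = rr n ρ0 s := by
          intro m hm; rw [Finset.mem_Icc] at hm; exact hconst m hm.1 hm.2
        rw [Finset.sum_congr rfl hcc, Finset.sum_const, Nat.card_Icc,
          show e + 1 - s = e - s + 1 by omega, nsmul_eq_mul]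
      have : v * ((e - s + 1 : ℕ) : ℝ) = rr n ρ0 s * ((e - s + 1 : ℕ) : ℝ) := by
        rw [hv2, hsc]; ring
      exact mul_right_cancel₀ (ne_of_gt hpose) this
    set s1 := blockStart A (j : ℕ) with hs1def
    set e1 := blockEnd n A (j : ℕ) with he1def
    have hs1j : s1 ≤ (j : ℕ) := bs_le A (j : ℕ)
    have hje1 : (j : ℕ) ≤ e1 := le_be n A (j : ℕ) hjn
    rcases lt_or_ge s1 s with hs1s | hs1s
    · -- s lies in the A-block of j
      have h := SAn_const ρ0 A (j : ℕ) s hjn (by omega) (by omega)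
      rw [← h]
      exact hAs
    · rcases le_or_gt e1 e with he1e | he1e
      · -- A-block of j inside B-block: constant
        have hm1 := SAn_mul ρ0 A (j : ℕ) hjn
        have hsc : ∑ m ∈ Finset.Icc s1 e1, rr n ρ0 m = ((e1 - s1 + 1 : ℕ) : ℝ) * rr n ρ0 s := by
          have hcc : ∀ m ∈ Finset.Icc s1 e1, rr n ρ0 m = rr n ρ0 s := by
            intro m hm; rw [Finset.mem_Icc] at hm; exact hconst m (by omega) (by omega)
          rw [Finset.sum_congr rfl hcc, Finset.sum_const, Nat.card_Icc,
            show e1 + 1 - s1 = e1 - s1 + 1 by omega, nsmul_eq_mul]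
        have hpos1 : (0:ℝ) < ((e1 - s1 + 1 : ℕ) : ℝ) := by
          have h : 0 < e1 - s1 + 1 := by omega
          exact_mod_cast h
        have : SAn n ρ0 A (j : ℕ) * ((e1 - s1 + 1 : ℕ) : ℝ) =
            rr n ρ0 s * ((e1 - s1 + 1 : ℕ) : ℝ) := by
          rw [hm1, hsc]; ring
        rw [mul_right_cancel₀ (ne_of_gt hpos1) this, ← hvrr]
      · -- A-block of j sticks out to the right
        have h1 : Gg n ρ0 A (e + 1) = Tt n ρ0 (e + 1) :=
          step1 A hAmem hApos (e + 1) (by omega) hbd_e1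
        have h2 : Gg n ρ0 A (e + 1) = Gg n ρ0 A s1 +
            ((e + 1 - s1 : ℕ) : ℝ) * SAn n ρ0 A (j : ℕ) :=
          G_formula ρ0 A (j : ℕ) (e + 1) hjn (by omega) (by omega)
        have h3 : Gg n ρ0 A s1 = Tt n ρ0 s1 := by
          refine G_boundary ρ0 hn A hA s1 (by omega) ?_
          rcases bs_spec A (j : ℕ) with h | h
          · exact Or.inl h
          · exact Or.inr h.2
        have h4 : Tt n ρ0 (e + 1) = Tt n ρ0 s1 + ∑ m ∈ Finset.Icc s1 e, rr n ρ0 m := by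
          rw [Tt_split ρ0 s1 (e + 1) (by omega), Finset.Ico_add_one_right_eq_Icc]
        have h5 : ∑ m ∈ Finset.Icc s1 e, rr n ρ0 m = ((e - s1 + 1 : ℕ) : ℝ) * rr n ρ0 s := by
          have hcc : ∀ m ∈ Finset.Icc s1 e, rr n ρ0 m = rr n ρ0 s := by
            intro m hm; rw [Finset.mem_Icc] at hm; exact hconst m (by omega) (by omega)
          rw [Finset.sum_congr rfl hcc, Finset.sum_const, Nat.card_Icc,
            show e + 1 - s1 = e - s1 + 1 by omega, nsmul_eq_mul]
        have hpos1 : (0:ℝ) < ((e + 1 - s1 : ℕ) : ℝ) := by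
          have h : 0 < e + 1 - s1 := by omega
          exact_mod_cast h
        have hkey : ((e + 1 - s1 : ℕ) : ℝ) * SAn n ρ0 A (j : ℕ) =
            ((e + 1 - s1 : ℕ) : ℝ) * rr n ρ0 s := by
          rw [show ((e + 1 - s1 : ℕ) : ℝ) * rr n ρ0 s =
            ((e - s1 + 1 : ℕ) : ℝ) * rr n ρ0 s by
              rw [show ((e + 1 - s1 : ℕ) : ℝ) = ((e - s1 + 1 : ℕ) : ℝ) by congr 1; omega]]
          linarith [h1, h2, h3, h4, h5]
        rw [mul_left_cancel₀ (ne_of_gt hpos1) hkey, ← hvrr]
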